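/- Let λ, μ > 0 and ρ = λ/μ, and assume ρ > 1/e. Then there is no differentiable function ε : [0,∞) → ℝ with ε(0) = 0, ε' positive and nonincreasing with lim_{t→∞} ε'(t) = 0, satisfying ρ = ε'(t)/μ + ∫_0^t ε'(z)·exp(−ε(t−z)) dz for all t ≥ 0. Equivalently, any such solution ε of this equation has inf_{t ≥ 0} ε'(t) > 0. -/

import Mathlib

open Set MeasureTheory intervalIntegral Real

lemma aux_xexp (x : ℝ) : x * Real.exp (-x) ≤ (Real.exp 1)⁻¹ := by
  have h := Real.add_one_le_exp (x - 1)
  have hx : x ≤ Real.exp (x - 1) := by linarith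
  calc x * Real.exp (-x) ≤ Real.exp (x - 1) * Real.exp (-x) :=
        mul_le_mul_of_nonneg_right hx (Real.exp_pos _).le
    _ = Real.exp (-1) := by rw [← Real.exp_add]; congr 1; ring
    _ = (Real.exp 1)⁻¹ := by rw [Real.exp_neg]

lemma aux_xexp2 (x : ℝ) : x * Real.exp (-x) ≤ 2 * (Real.exp 1)⁻¹ * Real.exp (-(x/2)) := by
  have h := Real.add_one_le_exp (x/2 - 1)
  have hx : x ≤ 2 * Real.exp (x/2 - 1) := by linarith
  calc x * Real.exp (-x) ≤ (2 * Real.exp (x/2 - 1)) * Real.exp (-x) :=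
        mul_le_mul_of_nonneg_right hx (Real.exp_pos _).le
    _ = 2 * (Real.exp (x/2 - 1) * Real.exp (-x)) := by ring
    _ = 2 * ((Real.exp 1)⁻¹ * Real.exp (-(x/2))) := by
        rw [← Real.exp_add, ← Real.exp_neg 1, ← Real.exp_add]; congr 2; ring
    _ = 2 * (Real.exp 1)⁻¹ * Real.exp (-(x/2)) := by ring

set_option maxHeartbeats 1000000 in
lemma key (lam mu : ℝ) (hmu : 0 < mu)
    (hρ : (Real.exp 1)⁻¹ < lam / mu)
    (ε ε' : ℝ → ℝ)
    (hd : ∀ t ∈ Set.Ici (0 : ℝ), HasDerivWithinAt ε (ε' t) (Set.Ici 0) t)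
    (h0 : ε 0 = 0)
    (hpos : ∀ t ∈ Set.Ici (0 : ℝ), 0 < ε' t)
    (hanti : AntitoneOn ε' (Set.Ici 0))
    (heq : ∀ t ∈ Set.Ici (0 : ℝ),
      lam / mu = ε' t / mu + ∫ z in (0 : ℝ)..t, ε' z * Real.exp (-(ε (t - z))))
    (hsmall : ∀ η, 0 < η → ∃ T, 0 ≤ T ∧ ∀ t, T ≤ t → ε' t < η) : False := by
  have hepos : (0:ℝ) < (Real.exp 1)⁻¹ := inv_pos.2 (Real.exp_pos 1)
  have hρpos : 0 < lam / mu := hepos.trans hρ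
  have hcont : ContinuousOn ε (Set.Ici 0) := fun t ht => (hd t ht).continuousWithinAt
  have hDA : ∀ x : ℝ, 0 < x → HasDerivAt ε (ε' x) x := fun x hx =>
    (hd x hx.le).hasDerivAt (Ici_mem_nhds hx)
  have hmono : MonotoneOn ε (Set.Ici 0) := by
    apply monotoneOn_of_deriv_nonneg (convex_Ici 0) hcont
    · intro x hx
      rw [interior_Ici] at hx
      exact (hDA x hx).differentiableAt.differentiableWithinAt
    · intro x hx
      rw [interior_Ici] at hx
      rw [(hDA x hx).deriv]
      exact (hpos x (Set.mem_Ici.2 (le_of_lt hx))).le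
  have hεnn : ∀ t, 0 ≤ t → 0 ≤ ε t := by
    intro t ht
    have := hmono (Set.self_mem_Ici) (show t ∈ Set.Ici (0:ℝ) from ht) ht
    rwa [h0] at this
  have hexp_le_one : ∀ s : ℝ, 0 ≤ s → Real.exp (-(ε s)) ≤ 1 := by
    intro s hs
    have := Real.exp_le_exp.2 (neg_nonpos.2 (hεnn s hs))
    rwa [Real.exp_zero] at this
  have hslope : ∀ T, 0 ≤ T → MonotoneOn (fun x => ε x - ε' T * x) (Set.Icc 0 T) := by
    intro T hT
    apply monotoneOn_of_deriv_nonneg (convex_Icc 0 T)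
    · exact (hcont.mono (Set.Icc_subset_Ici_self)).sub
        ((continuous_const.mul continuous_id).continuousOn)
    · intro x hx
      rw [interior_Icc] at hx
      exact ((hDA x hx.1).sub ((hasDerivAt_id x).const_mul (ε' T))).differentiableAt.differentiableWithinAt
    · intro x hx
      rw [interior_Icc] at hx
      have hD : HasDerivAt (fun x => ε x - ε' T * x) (ε' x - ε' T * 1) x :=
        (hDA x hx.1).sub ((hasDerivAt_id x).const_mul (ε' T))
      rw [hD.deriv]
      have h1 : ε' T ≤ ε' x := hanti (show x ∈ Set.Ici (0:ℝ) from hx.1.le)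
        (show T ∈ Set.Ici (0:ℝ) from hT) hx.2.le
      linarith
  have hIε' : ∀ a b : ℝ, 0 ≤ a → a ≤ b → IntervalIntegrable ε' volume a b := by
    intro a b ha hab
    apply AntitoneOn.intervalIntegrable
    apply hanti.mono
    rw [Set.uIcc_of_le hab]
    exact fun x hx => ha.trans hx.1
  have hFTC : ∀ a b : ℝ, 0 ≤ a → a ≤ b → (∫ z in a..b, ε' z) = ε b - ε a := by
    intro a b ha hab
    apply intervalIntegral.integral_eq_sub_of_hasDeriv_right_of_le hab
      (hcont.mono (fun x hx => ha.trans hx.1))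
      (fun x hx => ((hd x (ha.trans hx.1.le)).mono
        (fun y hy => ((ha.trans hx.1.le).trans (le_of_lt hy))))
      )
      (hIε' a b ha hab)
  have hcontexp : ContinuousOn (fun u => Real.exp (-(ε u))) (Set.Ici 0) :=
    Real.continuous_exp.comp_continuousOn hcont.neg
  have hIntExp : ∀ a b : ℝ, 0 ≤ a → a ≤ b →
      IntervalIntegrable (fun u => Real.exp (-(ε u))) volume a b := by
    intro a b ha hab
    apply ContinuousOn.intervalIntegrable
    apply hcontexp.mono
    rw [Set.uIcc_of_le hab]
    exact fun x hx => ha.trans hx.1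
  have hIntf : ∀ t a b : ℝ, 0 ≤ a → a ≤ b → b ≤ t →
      IntervalIntegrable (fun z => ε' z * Real.exp (-(ε (t - z)))) volume a b := by
    intro t a b ha hab hbt
    apply (hIε' a b ha hab).mul_continuousOn
    rw [Set.uIcc_of_le hab]
    apply Real.continuous_exp.comp_continuousOn
    apply ContinuousOn.neg
    apply hcont.comp ((continuous_const.sub continuous_id).continuousOn)
    intro z hz
    exact sub_nonneg.2 (hz.2.trans hbt)
  by_cases hB : ∃ B, ∀ t, 0 ≤ t → ε t ≤ B
  · -- Case 1 : ε bounded, sup L, L e^{-L} ≤ 1/e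
    obtain ⟨B, hB⟩ := hB
    have hSne : (ε '' Set.Ici (0:ℝ)).Nonempty := ⟨ε 0, Set.mem_image_of_mem _ Set.self_mem_Ici⟩
    have hSbdd : BddAbove (ε '' Set.Ici (0:ℝ)) := by
      refine ⟨B, ?_⟩
      rintro x ⟨s, hs, rfl⟩
      exact hB s hs
    set L := sSup (ε '' Set.Ici (0:ℝ)) with hLdef
    have hle : ∀ t, 0 ≤ t → ε t ≤ L := fun t ht =>
      le_csSup hSbdd (Set.mem_image_of_mem _ ht)
    have hL0 : 0 ≤ L := by
      have := hle 0 le_rfl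
      rwa [h0] at this
    set η := min 1 ((lam/mu - (Real.exp 1)⁻¹)/4) with hηdef
    have hηpos : 0 < η := lt_min one_pos (by linarith)
    have hη1 : η ≤ 1 := min_le_left _ _
    have hη4 : 4 * η ≤ lam/mu - (Real.exp 1)⁻¹ := by
      have := min_le_right 1 ((lam/mu - (Real.exp 1)⁻¹)/4)
      have h2 : η ≤ (lam/mu - (Real.exp 1)⁻¹)/4 := this
      linarith
    obtain ⟨x, hxS, hx⟩ := exists_lt_of_lt_csSup hSne (show L - η < L by linarith)
    obtain ⟨A, hA0', rfl⟩ := hxS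
    have hA0 : (0:ℝ) ≤ A := hA0'
    obtain ⟨T₁, hT₁0, hT₁⟩ := hsmall (η * mu) (mul_pos hηpos hmu)
    set t := max (2*A) T₁ with htdef
    have ht0 : 0 ≤ t := le_trans hT₁0 (le_max_right _ _)
    have htA : A ≤ t := le_trans (by linarith) (le_max_left _ _)
    have htA2 : A ≤ t - A := by
      have := le_max_left (2*A) T₁
      linarith
    have htA0 : 0 ≤ t - A := hA0.trans htA2
    have hI1 : IntervalIntegrable (fun z => ε' z * Real.exp (-(ε (t - z)))) volume 0 A :=
      hIntf t 0 A le_rfl hA0 htA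
    have hI2 : IntervalIntegrable (fun z => ε' z * Real.exp (-(ε (t - z)))) volume A t :=
      hIntf t A t hA0 htA le_rfl
    have heqt := heq t ht0
    have hP1 : (∫ z in (0:ℝ)..A, ε' z * Real.exp (-(ε (t - z))))
        ≤ Real.exp (-(ε (t - A))) * ε A := by
      have hb : (∫ z in (0:ℝ)..A, ε' z * Real.exp (-(ε (t - A))))
          = Real.exp (-(ε (t - A))) * ε A := by
        rw [intervalIntegral.integral_mul_const, hFTC 0 A le_rfl hA0, h0, sub_zero, mul_comm]
      rw [← hb]
      apply intervalIntegral.integral_mono_on hA0 hI1 ((hIε' 0 A le_rfl hA0).mul_const _)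
      intro z hz
      apply mul_le_mul_of_nonneg_left _ (hpos z hz.1).le
      apply Real.exp_le_exp.2
      apply neg_le_neg
      exact hmono (show t - A ∈ Set.Ici (0:ℝ) from htA0)
        (show t - z ∈ Set.Ici (0:ℝ) from by
          have := hz.2
          simp only [Set.mem_Ici]
          linarith)
        (by linarith [hz.2])
    have hP2 : (∫ z in A..t, ε' z * Real.exp (-(ε (t - z)))) ≤ ε t - ε A := by
      rw [← hFTC A t hA0 htA]
      apply intervalIntegral.integral_mono_on htA hI2 (hIε' A t hA0 htA)
      intro z hz
      have h1 : Real.exp (-(ε (t - z))) ≤ 1 := hexp_le_one _ (by linarith [hz.2])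
      have h2 : 0 < ε' z := hpos z (hA0.trans hz.1)
      nlinarith
    have hexp1 : Real.exp (-(ε (t - A))) ≤ Real.exp η * Real.exp (-L) := by
      rw [← Real.exp_add]
      apply Real.exp_le_exp.2
      have h1 : L - η < ε (t - A) :=
        lt_of_lt_of_le hx (hmono (show A ∈ Set.Ici (0:ℝ) from hA0)
          (show t - A ∈ Set.Ici (0:ℝ) from htA0) htA2)
      linarith
    have hS1 : Real.exp (-(ε (t - A))) * ε A ≤ Real.exp η * (Real.exp 1)⁻¹ := by
      have hεA : 0 ≤ ε A := hεnn A hA0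
      have hεAL : ε A ≤ L := hle A hA0
      calc Real.exp (-(ε (t - A))) * ε A
          ≤ (Real.exp η * Real.exp (-L)) * L := by
            apply mul_le_mul hexp1 hεAL hεA
            positivity
        _ = Real.exp η * (L * Real.exp (-L)) := by ring
        _ ≤ Real.exp η * (Real.exp 1)⁻¹ :=
            mul_le_mul_of_nonneg_left (aux_xexp L) (Real.exp_pos _).le
    have hS2 : ε t - ε A ≤ η := by
      have := hle t ht0
      linarith
    have hεt' : ε' t / mu < η := by
      have h1 := hT₁ t (le_max_right _ _)
      rw [div_lt_iff₀ hmu]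
      linarith [mul_comm η mu]
    have hfinal1 : Real.exp η * (Real.exp 1)⁻¹ ≤ (Real.exp 1)⁻¹ + η := by
      have hm : Real.exp η * Real.exp (-η) = 1 := by
        rw [← Real.exp_add]; simp
      have ha := Real.add_one_le_exp (-η)
      have he1 : Real.exp η ≤ Real.exp 1 := Real.exp_le_exp.2 hη1
      have hee : Real.exp 1 * (Real.exp 1)⁻¹ = 1 := mul_inv_cancel₀ (ne_of_gt (Real.exp_pos 1))
      have hx1 : Real.exp η - 1 ≤ η * Real.exp η := by
        nlinarith [Real.exp_pos η]
      nlinarith [Real.exp_pos η, hepos]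
    have hsum : lam / mu = ε' t / mu
        + ((∫ z in (0:ℝ)..A, ε' z * Real.exp (-(ε (t - z))))
          + (∫ z in A..t, ε' z * Real.exp (-(ε (t - z))))) := by
      rw [heqt, intervalIntegral.integral_add_adjacent_intervals hI1 hI2]
    have : lam / mu ≤ η + ((Real.exp 1)⁻¹ + η + η) := by
      rw [hsum]
      have := hP1.trans (hS1.trans hfinal1)
      linarith
    linarith
  · -- Case 2 : ε unbounded
    push_neg at hB
    set η := (lam/mu)/5 with hηdef
    have hηpos : 0 < η := by
      rw [hηdef]; linarith
    obtain ⟨A, hA0, hAM⟩ := hB (max (Real.log η⁻¹) (2 * Real.log (2 * (Real.exp 1)⁻¹ * η⁻¹)))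
    have hexpA : Real.exp (-(ε A)) ≤ η := by
      have h1 : Real.log η⁻¹ < ε A := lt_of_le_of_lt (le_max_left _ _) hAM
      have h2 : Real.exp (-(ε A)) < Real.exp (-(Real.log η⁻¹)) :=
        Real.exp_lt_exp.2 (by linarith)
      rw [Real.log_inv, neg_neg, Real.exp_log hηpos] at h2
      exact h2.le
    have hxeη : ∀ x : ℝ, ε A ≤ x → x * Real.exp (-x) ≤ η := by
      intro x hxx
      have h2 : 2 * Real.log (2 * (Real.exp 1)⁻¹ * η⁻¹) < x :=
        lt_of_le_of_lt (le_max_right _ _) (hAM.trans_le hxx)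
      have hcpos : 0 < 2 * (Real.exp 1)⁻¹ * η⁻¹ := by positivity
      have h3 : Real.exp (-(x/2)) ≤ (2 * (Real.exp 1)⁻¹ * η⁻¹)⁻¹ := by
        have h4 : -(x/2) ≤ -(Real.log (2 * (Real.exp 1)⁻¹ * η⁻¹)) := by linarith
        calc Real.exp (-(x/2)) ≤ Real.exp (-(Real.log (2 * (Real.exp 1)⁻¹ * η⁻¹))) :=
              Real.exp_le_exp.2 h4
          _ = (2 * (Real.exp 1)⁻¹ * η⁻¹)⁻¹ := by rw [Real.exp_neg, Real.exp_log hcpos]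
      calc x * Real.exp (-x) ≤ 2 * (Real.exp 1)⁻¹ * Real.exp (-(x/2)) := aux_xexp2 x
        _ ≤ 2 * (Real.exp 1)⁻¹ * (2 * (Real.exp 1)⁻¹ * η⁻¹)⁻¹ :=
            mul_le_mul_of_nonneg_left h3 (by positivity)
        _ = η := by
            field_simp
    obtain ⟨T₂, hT₂0, hT₂⟩ := hsmall (min (η/(A+1)) (η*mu))
      (lt_min (by positivity) (mul_pos hηpos hmu))
    set T := max A T₂ with hTdef
    have hT0 : 0 ≤ T := le_trans hA0 (le_max_left _ _)
    have hTA : A ≤ T := le_max_left _ _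
    have ht0 : (0:ℝ) ≤ 2*T := by linarith
    have hTt : T ≤ 2*T := by linarith
    set c := ε' T with hcdef
    have hcpos' : 0 < c := hpos T hT0
    have hcsmallA : c < η/(A+1) := lt_of_lt_of_le (hT₂ T (le_max_right _ _)) (min_le_left _ _)
    have hcA : c * A ≤ η := by
      have h1 : c * (A+1) < η := by
        rw [← lt_div_iff₀ (by linarith : (0:ℝ) < A + 1)]
        exact hcsmallA
      nlinarith
    -- J bound : ∫_0^T exp(-ε) ≤ A + η/c
    have hJ0A : (∫ u in (0:ℝ)..A, Real.exp (-(ε u))) ≤ A := by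
      have h1 : (∫ u in (0:ℝ)..A, Real.exp (-(ε u))) ≤ ∫ u in (0:ℝ)..A, (1:ℝ) :=
        intervalIntegral.integral_mono_on hA0 (hIntExp 0 A le_rfl hA0)
          intervalIntegrable_const (fun x hx => hexp_le_one x hx.1)
      simpa using h1
    have hJAT : (∫ u in A..T, Real.exp (-(ε u))) ≤ η / c := by
      have hpt : ∀ u ∈ Set.Icc A T, Real.exp (-(ε u)) ≤ η * Real.exp (-((u - A)*c)) := by
        intro u hu
        have hsl := hslope T hT0 (show A ∈ Set.Icc (0:ℝ) T from ⟨hA0, hTA⟩)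
          (show u ∈ Set.Icc (0:ℝ) T from ⟨hA0.trans hu.1, hu.2⟩) hu.1
        simp only at hsl
        have hε_u : ε A + (u - A)*c ≤ ε u := by
          have hexp2 : (u - A) * c = ε' T * u - ε' T * A := by rw [hcdef]; ring
          linarith [hsl, hexp2.le, hexp2.ge]
        calc Real.exp (-(ε u)) ≤ Real.exp (-(ε A) + -((u-A)*c)) := by
              apply Real.exp_le_exp.2; linarith
          _ = Real.exp (-(ε A)) * Real.exp (-((u-A)*c)) := Real.exp_add _ _
          _ ≤ η * Real.exp (-((u-A)*c)) :=
              mul_le_mul_of_nonneg_right hexpA (Real.exp_pos _).le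
      have hcontg : Continuous (fun u : ℝ => η * Real.exp (-((u - A)*c))) := by
        continuity
      have hint2 : (∫ u in A..T, η * Real.exp (-((u - A)*c)))
          = η * (c⁻¹ * (1 - Real.exp (-((T - A)*c)))) := by
        rw [intervalIntegral.integral_const_mul]
        congr 1
        have hder : ∀ u ∈ Set.uIcc A T,
            HasDerivAt (fun u => -(c⁻¹) * Real.exp (-((u - A)*c))) (Real.exp (-((u - A)*c))) u := by
          intro u _
          have h1 : HasDerivAt (fun u : ℝ => -((u - A)*c)) (-c) u := by
            have h := (((hasDerivAt_id u).sub_const A).mul_const c).neg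
            rw [one_mul] at h
            exact h
          have h2 := (h1.exp).const_mul (-(c⁻¹))
          refine h2.congr_deriv ?_
          rw [show -c⁻¹ * (Real.exp (-((u - A)*c)) * -c) = (c⁻¹ * c) * Real.exp (-((u - A)*c)) by ring,
            inv_mul_cancel₀ hcpos'.ne', one_mul]
        rw [intervalIntegral.integral_eq_sub_of_hasDerivAt hder
          (by apply Continuous.intervalIntegrable; continuity)]
        rw [sub_self, zero_mul, neg_zero, Real.exp_zero]
        ring
      have h5 : (∫ u in A..T, Real.exp (-(ε u))) ≤ ∫ u in A..T, η * Real.exp (-((u - A)*c)) :=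
        intervalIntegral.integral_mono_on hTA (hIntExp A T hA0 hTA)
          (hcontg.intervalIntegrable _ _) hpt
      have h6 : η * (c⁻¹ * (1 - Real.exp (-((T - A)*c)))) ≤ η / c := by
        rw [div_eq_mul_inv]
        have hci : 0 < c⁻¹ := inv_pos.2 hcpos'
        have h7 : 1 - Real.exp (-((T - A)*c)) ≤ 1 := by
          linarith [(Real.exp_pos (-((T - A)*c))).le]
        calc η * (c⁻¹ * (1 - Real.exp (-((T - A)*c))))
            ≤ η * (c⁻¹ * 1) :=
              mul_le_mul_of_nonneg_left (mul_le_mul_of_nonneg_left h7 hci.le) hηpos.le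
          _ = η * c⁻¹ := by ring
      linarith [hint2 ▸ h5]
    have hJ : (∫ u in (0:ℝ)..T, Real.exp (-(ε u))) ≤ A + η / c := by
      rw [← intervalIntegral.integral_add_adjacent_intervals
        (hIntExp 0 A le_rfl hA0) (hIntExp A T hA0 hTA)]
      linarith
    -- pieces at t = 2T
    have hI1 : IntervalIntegrable (fun z => ε' z * Real.exp (-(ε (2*T - z)))) volume 0 T :=
      hIntf (2*T) 0 T le_rfl hT0 hTt
    have hI2 : IntervalIntegrable (fun z => ε' z * Real.exp (-(ε (2*T - z)))) volume T (2*T) :=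
      hIntf (2*T) T (2*T) hT0 hTt le_rfl
    have heqt := heq (2*T) ht0
    have hP2 : (∫ z in (0:ℝ)..T, ε' z * Real.exp (-(ε (2*T - z)))) ≤ η := by
      have hb : (∫ z in (0:ℝ)..T, ε' z * Real.exp (-(ε T))) = ε T * Real.exp (-(ε T)) := by
        rw [intervalIntegral.integral_mul_const, hFTC 0 T le_rfl hT0, h0, sub_zero]
      have hm : (∫ z in (0:ℝ)..T, ε' z * Real.exp (-(ε (2*T - z))))
          ≤ ∫ z in (0:ℝ)..T, ε' z * Real.exp (-(ε T)) := by
        apply intervalIntegral.integral_mono_on hT0 hI1 ((hIε' 0 T le_rfl hT0).mul_const _)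
        intro z hz
        apply mul_le_mul_of_nonneg_left _ (hpos z hz.1).le
        apply Real.exp_le_exp.2
        apply neg_le_neg
        exact hmono (show T ∈ Set.Ici (0:ℝ) from hT0)
          (show 2*T - z ∈ Set.Ici (0:ℝ) from by
            simp only [Set.mem_Ici]; linarith [hz.2])
          (by linarith [hz.2])
      have hεT : ε A ≤ ε T := hmono (show A ∈ Set.Ici (0:ℝ) from hA0)
        (show T ∈ Set.Ici (0:ℝ) from hT0) hTA
      calc (∫ z in (0:ℝ)..T, ε' z * Real.exp (-(ε (2*T - z))))
          ≤ ε T * Real.exp (-(ε T)) := by rw [← hb]; exact hm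
        _ ≤ η := hxeη (ε T) hεT
    have hP1 : (∫ z in T..(2*T), ε' z * Real.exp (-(ε (2*T - z)))) ≤ 2*η := by
      have hcont2 : ContinuousOn (fun z => Real.exp (-(ε (2*T - z)))) (Set.Icc T (2*T)) := by
        apply Real.continuous_exp.comp_continuousOn
        apply ContinuousOn.neg
        apply hcont.comp ((continuous_const.sub continuous_id).continuousOn)
        intro z hz
        simp only [Set.mem_Ici, id_eq, Pi.sub_apply]
        linarith [hz.2]
      have hIc : IntervalIntegrable (fun z => c * Real.exp (-(ε (2*T - z)))) volume T (2*T) := by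
        apply ContinuousOn.intervalIntegrable
        rw [Set.uIcc_of_le hTt]
        exact continuousOn_const.mul hcont2
      have step1 : (∫ z in T..(2*T), ε' z * Real.exp (-(ε (2*T - z))))
          ≤ ∫ z in T..(2*T), c * Real.exp (-(ε (2*T - z))) := by
        apply intervalIntegral.integral_mono_on hTt hI2 hIc
        intro z hz
        have h1 : ε' z ≤ c := hanti (show T ∈ Set.Ici (0:ℝ) from hT0)
          (show z ∈ Set.Ici (0:ℝ) from hT0.trans hz.1) hz.1
        exact mul_le_mul_of_nonneg_right h1 (Real.exp_pos _).le
      have step2 : (∫ z in T..(2*T), c * Real.exp (-(ε (2*T - z))))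
          = c * ∫ u in (0:ℝ)..T, Real.exp (-(ε u)) := by
        rw [intervalIntegral.integral_const_mul]
        congr 1
        have h3 := intervalIntegral.integral_comp_sub_left
          (a := T) (b := 2*T) (fun u => Real.exp (-(ε u))) (2*T)
        rw [show (2*T - (2*T) : ℝ) = 0 by ring, show (2*T - T : ℝ) = T by ring] at h3
        exact h3
      calc (∫ z in T..(2*T), ε' z * Real.exp (-(ε (2*T - z))))
          ≤ c * ∫ u in (0:ℝ)..T, Real.exp (-(ε u)) := by rw [← step2]; exact step1
        _ ≤ c * (A + η/c) := mul_le_mul_of_nonneg_left hJ hcpos'.le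
        _ = c*A + η := by field_simp
        _ ≤ 2*η := by linarith
    have hεt' : ε' (2*T) / mu < η := by
      have h1 := hT₂ (2*T) (le_trans (le_max_right A T₂) hTt)
      have h2 := lt_of_lt_of_le h1 (min_le_right _ _)
      rw [div_lt_iff₀ hmu]
      linarith [mul_comm η mu]
    have hsum : lam / mu = ε' (2*T) / mu
        + ((∫ z in (0:ℝ)..T, ε' z * Real.exp (-(ε (2*T - z))))
          + (∫ z in T..(2*T), ε' z * Real.exp (-(ε (2*T - z))))) := by
      rw [heqt, intervalIntegral.integral_add_adjacent_intervals hI1 hI2]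
    have hfinal : lam / mu ≤ η + (η + 2*η) := by
      rw [hsum]
      linarith
    rw [hηdef] at hfinal
    linarith


/-- If `ρ = λ/μ > 1/e`, there is no differentiable `ε` on `[0,∞)`
with `ε 0 = 0`, `ε'` positive and nonincreasing with `ε' t → 0`, satisfying
`ρ = ε' t / μ + ∫_0^t ε' z * exp (-(ε (t-z))) dz` for all `t ≥ 0`; equivalently,
any such solution has `inf_{t ≥ 0} ε' t > 0`. -/
theorem stmt_4 (lam mu : ℝ) (hlam : 0 < lam) (hmu : 0 < mu)
    (hρ : (Real.exp 1)⁻¹ < lam / mu) :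
    (¬ ∃ ε ε' : ℝ → ℝ,
      (∀ t ∈ Set.Ici (0 : ℝ), HasDerivWithinAt ε (ε' t) (Set.Ici 0) t) ∧
      ε 0 = 0 ∧
      (∀ t ∈ Set.Ici (0 : ℝ), 0 < ε' t) ∧
      AntitoneOn ε' (Set.Ici 0) ∧
      Filter.Tendsto ε' Filter.atTop (nhds 0) ∧
      (∀ t ∈ Set.Ici (0 : ℝ),
        lam / mu = ε' t / mu + ∫ z in (0 : ℝ)..t, ε' z * Real.exp (-(ε (t - z))))) ∧
    ∀ ε ε' : ℝ → ℝ,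
      (∀ t ∈ Set.Ici (0 : ℝ), HasDerivWithinAt ε (ε' t) (Set.Ici 0) t) →
      ε 0 = 0 →
      (∀ t ∈ Set.Ici (0 : ℝ), 0 < ε' t) →
      AntitoneOn ε' (Set.Ici 0) →
      (∀ t ∈ Set.Ici (0 : ℝ),
        lam / mu = ε' t / mu + ∫ z in (0 : ℝ)..t, ε' z * Real.exp (-(ε (t - z)))) →
      ∃ c : ℝ, 0 < c ∧ ∀ t ∈ Set.Ici (0 : ℝ), c ≤ ε' t := by
  constructor
  · rintro ⟨ε, ε', hd, h0, hpos, hanti, htend, heq⟩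
    apply key lam mu hmu hρ ε ε' hd h0 hpos hanti heq
    intro η hη
    obtain ⟨N, hN⟩ := Metric.tendsto_atTop.mp htend η hη
    refine ⟨max 0 N, le_max_left _ _, fun t ht => ?_⟩
    have h1 := hN t (le_trans (le_max_right 0 N) ht)
    rw [Real.dist_eq, sub_zero] at h1
    exact lt_of_le_of_lt (le_abs_self _) h1
  · intro ε ε' hd h0 hpos hanti heq
    have hbdd : BddBelow (ε' '' Set.Ici (0:ℝ)) := by
      refine ⟨0, ?_⟩
      rintro x ⟨s, hs, rfl⟩
      exact (hpos s hs).le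
    have hne : (ε' '' Set.Ici (0:ℝ)).Nonempty :=
      ⟨ε' 0, Set.mem_image_of_mem _ Set.self_mem_Ici⟩
    by_cases hc : 0 < sInf (ε' '' Set.Ici (0:ℝ))
    · exact ⟨_, hc, fun t ht => csInf_le hbdd (Set.mem_image_of_mem _ ht)⟩
    · exfalso
      apply key lam mu hmu hρ ε ε' hd h0 hpos hanti heq
      intro η hη
      have h1 : sInf (ε' '' Set.Ici (0:ℝ)) < η := lt_of_le_of_lt (not_lt.1 hc) hη
      obtain ⟨x, hxS, hx⟩ := exists_lt_of_csInf_lt hne h1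
      obtain ⟨s, hs, rfl⟩ := hxS
      refine ⟨s, hs, fun t ht => ?_⟩
      exact lt_of_le_of_lt (hanti hs (show t ∈ Set.Ici (0:ℝ) from le_trans hs ht) ht) hx
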